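/- Assume λ̃_r > λ̃_{r+1}. Let I ⊆ {1,…,d} be an r-element index set with I ≠ {1,…,r}, let Ψ ∈ ℝ^{r×r} be orthogonal, and let X = O^B (Λ^B)^{-1/2} O^Ã_{:,I} Ψ. Let m be the largest index in I and l the smallest index in {1,…,d} ∖ I (so l ≤ r < m). Then there exists V ∈ ℝ^{d×r} with Frobenius norm 1 such that q_X(V) ≤ 2(λ̃_m − λ̃_l) / ‖O^B (Λ^B)^{-1/2} O^Ã_{:,l}‖², and this upper bound is strictly negative; in particular the Hessian H_X has a negative eigenvalue, so (X, XᵀAX) is an unstable equilibrium. -/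

import Mathlib

open Matrix

/-- `ℓ(X) = L(X, XᵀAX) = -2 tr(XᵀAX) + tr((XᵀAX)(XᵀBX))`. -/
noncomputable def gevEll (d r : ℕ) (A B : Matrix (Fin d) (Fin d) ℝ)
    (X : Matrix (Fin d) (Fin r) ℝ) : ℝ :=
  -2 * (Xᵀ * A * X).trace + ((Xᵀ * A * X) * (Xᵀ * B * X)).trace

/-- `q_X(V)`: the quadratic form of the Hessian `H_X` of `ℓ` at `X`, i.e. the second
derivative at `t = 0` of `t ↦ ℓ(X + tV)`. -/
noncomputable def gevHessQuad (d r : ℕ) (A B : Matrix (Fin d) (Fin d) ℝ)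
    (X V : Matrix (Fin d) (Fin r) ℝ) : ℝ :=
  iteratedDeriv 2 (fun t : ℝ => gevEll d r A B (X + t • V)) 0

lemma gevAux_trace_std {n : Type*} [Fintype n] [DecidableEq n] (a : n) :
    (Matrix.single a a (1:ℝ)).trace = 1 := by
  simp [Matrix.trace, Matrix.diag, Matrix.single, Finset.sum_ite_eq]

lemma gevAux_diag_mul_std {n m : Type*} [Fintype n] [DecidableEq n] [DecidableEq m]
    (f : n → ℝ) (a : n) (b : m) :
    Matrix.diagonal f * Matrix.single a b (1:ℝ) = f a • Matrix.single a b 1 := by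
  ext p q
  rw [Matrix.diagonal_mul]
  by_cases hp : a = p
  · subst hp; simp [Matrix.single]
  · simp [Matrix.single, hp]

lemma gevAux_trace_diag_std {n : Type*} [Fintype n] [DecidableEq n] (f : n → ℝ) (a : n) :
    (Matrix.diagonal f * Matrix.single a a (1:ℝ)).trace = f a := by
  simp [Matrix.trace, Matrix.diag, Matrix.mul_apply, Matrix.diagonal_apply,
    Matrix.single, ite_and, Finset.sum_ite_eq, mul_ite, mul_one, mul_zero]

lemma gevAux_iteratedDeriv (a b e : ℝ) :
    iteratedDeriv 2 (fun t : ℝ => a + b * t ^ 2 + e * t ^ 4) 0 = 2 * b := by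
  have hder : deriv (fun t : ℝ => a + b * t ^ 2 + e * t ^ 4)
      = fun t : ℝ => b * (2 * t) + e * (4 * t ^ 3) := by
    funext t
    have h1 := (((hasDerivAt_pow 2 t).const_mul b).const_add a).add
        ((hasDerivAt_pow 4 t).const_mul e)
    rw [HasDerivAt.deriv (f := fun t : ℝ => a + b * t ^ 2 + e * t ^ 4) h1]
    norm_num
  show iteratedDeriv (1 + 1) (fun t : ℝ => a + b * t ^ 2 + e * t ^ 4) 0 = 2 * b
  rw [iteratedDeriv_succ, iteratedDeriv_one, hder]
  have h2 : HasDerivAt (fun t : ℝ => b * (2 * t) + e * (4 * t ^ 3))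
      (b * (2 * 1) + e * (4 * (((3:ℕ):ℝ) * (0:ℝ) ^ (3 - 1)))) 0 := by
    exact (((hasDerivAt_id (0:ℝ)).const_mul (2:ℝ)).const_mul b).add
      (((hasDerivAt_pow 3 (0:ℝ)).const_mul (4:ℝ)).const_mul e)
  rw [h2.deriv]
  norm_num [mul_comm]

/-- Assume the eigengap `λ̃_r > λ̃_{r+1}`.  If `I ≠ {1,…,r}` is an
`r`-element index set, `Ψ` is orthogonal and `X = O^B (Λ^B)^{-1/2} O^Ã_{:,I} Ψ`, then with
`m = max I` and `l = min Iᶜ`, there is a Frobenius-norm-one direction `V` with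
`q_X(V) ≤ 2(λ̃_m − λ̃_l)/‖O^B (Λ^B)^{-1/2} O^Ã_{:,l}‖² < 0`; in particular the Hessian
`H_X` has a negative eigenvalue, so `(X, XᵀAX)` is an unstable equilibrium. -/
theorem gev_unstable_equilibrium_negative_curvature
    (d r : ℕ) (hd : 1 ≤ d) (hr : 1 ≤ r) (hrlt : r < d)
    (A B : Matrix (Fin d) (Fin d) ℝ) (hA : Aᵀ = A) (hB : B.PosDef)
    (OB : Matrix (Fin d) (Fin d) ℝ) (hOB : OBᵀ * OB = 1)
    (μ : Fin d → ℝ) (hμ : ∀ k, 0 < μ k)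
    (hBdec : B = OB * diagonal μ * OBᵀ)
    (OA : Matrix (Fin d) (Fin d) ℝ) (hOA : OAᵀ * OA = 1)
    (lam : Fin d → ℝ) (hlam : ∀ k l : Fin d, k ≤ l → lam l ≤ lam k)
    (hgap : lam ⟨r, hrlt⟩ < lam ⟨r - 1, by omega⟩)
    (hAdec : diagonal (fun k => (Real.sqrt (μ k))⁻¹) * OBᵀ * A * OB *
        diagonal (fun k => (Real.sqrt (μ k))⁻¹) = OA * diagonal lam * OAᵀ)
    (I : Finset (Fin d)) (hI : I.card = r)
    (hIne : I ≠ Finset.univ.filter (fun k : Fin d => (k : ℕ) < r))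
    (Ψ : Matrix (Fin r) (Fin r) ℝ) (hΨ : Ψᵀ * Ψ = 1)
    (X : Matrix (Fin d) (Fin r) ℝ)
    (hX : X = OB * diagonal (fun k => (Real.sqrt (μ k))⁻¹) *
        OA.submatrix id (fun k => ((I.orderIsoOfFin hI k) : Fin d)) * Ψ)
    (m : Fin d) (hm : m = I.max' (Finset.card_pos.mp (by rw [hI]; omega)))
    (l : Fin d)
    (hl : l = Iᶜ.min' (Finset.card_pos.mp
      (by rw [Finset.card_compl, hI, Fintype.card_fin]; omega)))
    (nsq : ℝ)
    (hnsq : nsq = ∑ p : Fin d,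
      ((OB * diagonal (fun k => (Real.sqrt (μ k))⁻¹) * OA) p l) ^ 2) :
    ∃ V : Matrix (Fin d) (Fin r) ℝ, (∑ p : Fin d, ∑ k : Fin r, V p k ^ 2 = 1) ∧
      gevHessQuad d r A B X V ≤ 2 * (lam m - lam l) / nsq ∧
      2 * (lam m - lam l) / nsq < 0 := by
  classical
  set Dm : Matrix (Fin d) (Fin d) ℝ := diagonal (fun k => (Real.sqrt (μ k))⁻¹) with hDm
  set W : Matrix (Fin d) (Fin d) ℝ := OB * Dm * OA with hW
  set σ : Fin r → Fin d := fun k => ((I.orderIsoOfFin hI k) : Fin d) with hσ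
  have hσinj : Function.Injective σ :=
    fun a b h => (I.orderIsoOfFin hI).injective (Subtype.coe_injective h)
  have hσmem : ∀ k, σ k ∈ I := fun k => (I.orderIsoOfFin hI k).2
  have hmI : m ∈ I := by rw [hm]; exact I.max'_mem _
  have hlI : l ∉ I := by
    have : l ∈ Iᶜ := by rw [hl]; exact Finset.min'_mem _ _
    exact Finset.mem_compl.mp this
  have hσl : ∀ i : Fin r, σ i ≠ l := fun i h => hlI (h ▸ hσmem i)
  have hOA' : OA * OAᵀ = 1 := mul_eq_one_comm.mp hOA
  have hΨ' : Ψ * Ψᵀ = 1 := mul_eq_one_comm.mp hΨ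
  -- index inequalities
  have hcard : (Finset.univ.filter (fun k : Fin d => (k : ℕ) < r)).card = r := by
    have himg : Finset.univ.filter (fun k : Fin d => (k : ℕ) < r)
        = Finset.image (Fin.castLE hrlt.le) Finset.univ := by
      ext k
      constructor
      · intro hk
        have hk' : (k : ℕ) < r := (Finset.mem_filter.mp hk).2
        exact Finset.mem_image.mpr ⟨⟨(k : ℕ), hk'⟩, Finset.mem_univ _, rfl⟩
      · intro hk
        rcases Finset.mem_image.mp hk with ⟨a, -, rfl⟩
        exact Finset.mem_filter.mpr ⟨Finset.mem_univ _, a.2⟩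
    rw [himg, Finset.card_image_of_injective _ (Fin.castLE_injective _),
      Finset.card_univ, Fintype.card_fin]
  have hrm : r ≤ (m : ℕ) := by
    by_contra h
    push_neg at h
    have hall : ∀ k ∈ I, (k : ℕ) < r := by
      intro k hk
      have := Finset.le_max' I k hk
      rw [← hm] at this
      exact lt_of_le_of_lt (Fin.le_def.mp this) h
    have hsub : I ⊆ Finset.univ.filter (fun k : Fin d => (k : ℕ) < r) :=
      fun k hk => Finset.mem_filter.mpr ⟨Finset.mem_univ k, hall k hk⟩
    exact hIne (Finset.eq_of_subset_of_card_le hsub (by rw [hcard, hI]))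
  have hlr : (l : ℕ) < r := by
    by_contra h
    push_neg at h
    have hsub : Finset.univ.filter (fun k : Fin d => (k : ℕ) < r) ⊆ I := by
      intro k hk
      rcases Finset.mem_filter.mp hk with ⟨-, hk'⟩
      by_contra hkI
      have : l ≤ k := by rw [hl]; exact Finset.min'_le _ _ (Finset.mem_compl.mpr hkI)
      exact absurd hk' (not_lt.mpr (h.trans (Fin.le_def.mp this)))
    exact hIne ((Finset.eq_of_subset_of_card_le hsub (by rw [hI, hcard])).symm)
  have hml : lam m < lam l := by
    have h1 : lam m ≤ lam ⟨r, hrlt⟩ := hlam ⟨r, hrlt⟩ m (by rw [Fin.le_def]; exact hrm)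
    have h2 : lam ⟨r - 1, by omega⟩ ≤ lam l :=
      hlam l ⟨r - 1, by omega⟩ (by rw [Fin.le_def]; simp; omega)
    linarith [hgap]
  -- cancellation helpers
  have hOBc : ∀ Y : Matrix (Fin d) (Fin d) ℝ, OBᵀ * (OB * Y) = Y := by
    intro Y; rw [← Matrix.mul_assoc, hOB, Matrix.one_mul]
  have hOAc : ∀ Y : Matrix (Fin d) (Fin d) ℝ, OAᵀ * (OA * Y) = Y := by
    intro Y; rw [← Matrix.mul_assoc, hOA, Matrix.one_mul]
  have hΨc : ∀ Y : Matrix (Fin r) (Fin r) ℝ, Ψ * (Ψᵀ * Y) = Y := by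
    intro Y; rw [← Matrix.mul_assoc, hΨ', Matrix.one_mul]
  have hDμD : Dm * diagonal μ * Dm = 1 := by
    rw [hDm]
    simp only [diagonal_mul_diagonal]
    have hfun : (fun i => (Real.sqrt (μ i))⁻¹ * μ i * (Real.sqrt (μ i))⁻¹)
        = fun _ : Fin d => (1:ℝ) := by
      funext i
      have h1 : Real.sqrt (μ i) ≠ 0 := ne_of_gt (Real.sqrt_pos.mpr (hμ i))
      have h2 : Real.sqrt (μ i) * Real.sqrt (μ i) = μ i := Real.mul_self_sqrt (hμ i).le
      field_simp
      rw [Real.sq_sqrt (hμ i).le]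
    rw [hfun, diagonal_one]
  have hDμDc : ∀ Y : Matrix (Fin d) (Fin d) ℝ, Dm * (diagonal μ * (Dm * Y)) = Y := by
    intro Y
    rw [← Matrix.mul_assoc, ← Matrix.mul_assoc, hDμD, Matrix.one_mul]
  have hWBW : Wᵀ * B * W = 1 := by
    rw [hW, hBdec]
    simp only [transpose_mul, diagonal_transpose, Matrix.mul_assoc, hDm]
    rw [← hDm]
    rw [hOBc, hOBc, hDμDc, hOA]
  have hWAW : Wᵀ * A * W = diagonal lam := by
    have h1 : Wᵀ * A * W = OAᵀ * (Dm * OBᵀ * A * OB * Dm * OA) := by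
      rw [hW]
      simp only [transpose_mul, diagonal_transpose, Matrix.mul_assoc, hDm]
    rw [h1, ← Matrix.mul_assoc _ _ OA, hAdec]
    simp only [Matrix.mul_assoc]
    rw [hOA, Matrix.mul_one, hOAc]
  -- positivity of nsq
  have hnsqpos : 0 < nsq := by
    rcases lt_or_eq_of_le (by rw [hnsq]; positivity : (0:ℝ) ≤ nsq) with h | h
    · exact h
    exfalso
    have hcol : ∀ p, W p l = 0 := by
      intro p
      have h0 : ∑ p : Fin d, (W p l) ^ 2 = 0 := by rw [← hnsq, ← h]
      have := (Finset.sum_eq_zero_iff_of_nonneg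
        (fun p _ => sq_nonneg (W p l))).mp h0 p (Finset.mem_univ p)
      exact (pow_eq_zero_iff (by norm_num : (2:ℕ) ≠ 0)).mp this
    have h1 : (Wᵀ * B * W) l l = 0 := by
      rw [Matrix.mul_apply]
      refine Finset.sum_eq_zero fun q _ => ?_
      rw [hcol q, mul_zero]
    rw [hWBW] at h1
    simp at h1
  -- submatrix helpers
  have hsub1 : ∀ (M N : Matrix (Fin d) (Fin d) ℝ),
      (M * N).submatrix σ id = M.submatrix σ id * N := by
    intro M N
    simpa using Matrix.submatrix_mul M N σ id id Function.bijective_id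
  have hsub2 : ∀ (M N : Matrix (Fin d) (Fin d) ℝ),
      (M * N).submatrix id σ = M * N.submatrix id σ := by
    intro M N
    simpa using Matrix.submatrix_mul M N id id σ Function.bijective_id
  have hsub3 : ∀ (M N : Matrix (Fin d) (Fin d) ℝ),
      (M * N).submatrix σ σ = M.submatrix σ id * N.submatrix id σ := by
    intro M N
    simpa using Matrix.submatrix_mul M N σ id σ Function.bijective_id
  set P : Matrix (Fin d) (Fin r) ℝ := W.submatrix id σ with hP
  have hXP : X = P * Ψ := by
    rw [hX, hP, hW, hsub2]
  have hconj : ∀ M : Matrix (Fin d) (Fin d) ℝ,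
      Pᵀ * M * P = (Wᵀ * M * W).submatrix σ σ := by
    intro M
    rw [hP, transpose_submatrix, hsub3, hsub1]
  have hPMW : ∀ M : Matrix (Fin d) (Fin d) ℝ,
      Pᵀ * M * W = (Wᵀ * M * W).submatrix σ id := by
    intro M
    rw [hP, transpose_submatrix, hsub1, hsub1]
  have hconjΨ : ∀ M : Matrix (Fin d) (Fin d) ℝ,
      Xᵀ * M * X = Ψᵀ * ((Wᵀ * M * W).submatrix σ σ) * Ψ := by
    intro M
    rw [hXP, ← hconj M]
    simp only [transpose_mul, Matrix.mul_assoc]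
  -- the direction
  set j : Fin r := (I.orderIsoOfFin hI).symm ⟨m, hmI⟩ with hj
  have hjm : σ j = m := by
    rw [hσ, hj]
    simp
  set E : Matrix (Fin d) (Fin r) ℝ := Matrix.single l j 1 with hE
  set U : Matrix (Fin d) (Fin r) ℝ := W * (E * Ψ) with hU
  set c : ℝ := (Real.sqrt nsq)⁻¹ with hc
  have hc2 : c ^ 2 = nsq⁻¹ := by
    rw [hc, inv_pow, Real.sq_sqrt hnsqpos.le]
  set V : Matrix (Fin d) (Fin r) ℝ := c • U with hV
  -- key zero products
  have hzero : ∀ N : Matrix (Fin d) (Fin d) ℝ, (∀ i : Fin r, N (σ i) l = 0) →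
      N.submatrix σ id * E = 0 := by
    intro N hN
    ext i k
    rw [Matrix.mul_apply]
    simp only [Matrix.submatrix_apply, id_eq, hE, Matrix.single, Matrix.of_apply,
      Matrix.zero_apply, mul_ite, mul_one, mul_zero, ite_and]
    rw [Finset.sum_ite_eq Finset.univ l (fun q => if j = k then N (σ i) q else 0)]
    simp [hN i]
  have hXMU : ∀ M : Matrix (Fin d) (Fin d) ℝ,
      Xᵀ * M * U = Ψᵀ * (((Wᵀ * M * W).submatrix σ id * E) * Ψ) := by
    intro M
    rw [hXP, hU, ← hPMW M]
    simp only [transpose_mul, Matrix.mul_assoc]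
  have hUMU : ∀ M : Matrix (Fin d) (Fin d) ℝ,
      Uᵀ * M * U = Ψᵀ * (Eᵀ * (Wᵀ * M * W) * E) * Ψ := by
    intro M
    rw [hU]
    simp only [transpose_mul, Matrix.mul_assoc]
  have hXAU : Xᵀ * A * U = 0 := by
    rw [hXMU A, hWAW, hzero (diagonal lam) (fun i => diagonal_apply_ne lam (hσl i))]
    simp
  have hXBU : Xᵀ * B * U = 0 := by
    rw [hXMU B, hWBW, hzero 1 (fun i => Matrix.one_apply_ne (hσl i))]
    simp
  have hXAV : Xᵀ * A * V = 0 := by rw [hV, Matrix.mul_smul, hXAU, smul_zero]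
  have hXBV : Xᵀ * B * V = 0 := by rw [hV, Matrix.mul_smul, hXBU, smul_zero]
  have hBsym : Bᵀ = B := by
    rw [hBdec]
    simp [transpose_mul, diagonal_transpose, Matrix.mul_assoc]
  have htransp : ∀ (M : Matrix (Fin d) (Fin d) ℝ) (Y Z : Matrix (Fin d) (Fin r) ℝ),
      (Yᵀ * M * Z)ᵀ = Zᵀ * Mᵀ * Y := by
    intro M Y Z
    simp [transpose_mul, Matrix.mul_assoc]
  have hVAX : Vᵀ * A * X = 0 := by
    have h := htransp A X V
    rw [hXAV, hA] at h
    rw [← h]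
    simp
  have hVBX : Vᵀ * B * X = 0 := by
    have h := htransp B X V
    rw [hXBV, hBsym] at h
    rw [← h]
    simp
  -- identity values
  have hT0 : Xᵀ * B * X = 1 := by
    rw [hconjΨ B, hWBW, Matrix.submatrix_one σ hσinj, Matrix.mul_one, hΨ]
  have hS0 : Xᵀ * A * X = Ψᵀ * ((diagonal lam).submatrix σ σ) * Ψ := by
    rw [hconjΨ A, hWAW]
  have hDσ : (diagonal lam).submatrix σ σ = diagonal (fun k => lam (σ k)) := by
    ext a b
    by_cases hab : a = b
    · subst hab; simp
    · simp [Matrix.submatrix_apply, diagonal_apply_ne _ (fun h => hab (hσinj h)),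
        diagonal_apply_ne _ hab]
  have hEE : Eᵀ * E = Matrix.single j j (1:ℝ) := by
    ext a b
    rw [Matrix.mul_apply]
    have hterm : ∀ q : Fin d, Eᵀ a q * E q b
        = if l = q then (if j = a then (1:ℝ) else 0) * (if j = b then 1 else 0) else 0 := by
      intro q
      rw [Matrix.transpose_apply, hE]
      simp only [Matrix.single, Matrix.of_apply, ite_and]
      by_cases hq : l = q <;> simp [hq]
    simp only [hterm]
    rw [Finset.sum_ite_eq Finset.univ l
      (fun _ => (if j = a then (1:ℝ) else 0) * (if j = b then 1 else 0))]
    simp only [Finset.mem_univ, if_true, Matrix.single, Matrix.of_apply, ite_and]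
    by_cases h1 : j = a <;> by_cases h2 : j = b <;> simp [h1, h2]
  have hUAU : Uᵀ * A * U = lam l • (Ψᵀ * Matrix.single j j (1:ℝ) * Ψ) := by
    rw [hUMU A, hWAW]
    have hDE : diagonal lam * E = lam l • E := by
      rw [hE, gevAux_diag_mul_std]
    rw [Matrix.mul_assoc Eᵀ, hDE, Matrix.mul_smul, hEE, Matrix.mul_smul, Matrix.smul_mul]
  have hUBU : Uᵀ * B * U = Ψᵀ * Matrix.single j j (1:ℝ) * Ψ := by
    rw [hUMU B, hWBW, Matrix.mul_one, hEE]
  -- trace conjugation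
  have htrΨ : ∀ M : Matrix (Fin r) (Fin r) ℝ, (Ψᵀ * M * Ψ).trace = M.trace := by
    intro M
    rw [Matrix.trace_mul_comm, ← Matrix.mul_assoc, hΨ', Matrix.one_mul]
  -- V-quantities
  have hVAV : Vᵀ * A * V = (c ^ 2) • (Uᵀ * A * U) := by
    rw [hV]
    simp [Matrix.transpose_smul, Matrix.smul_mul, Matrix.mul_smul, smul_smul, pow_two]
  have hVBV : Vᵀ * B * V = (c ^ 2) • (Uᵀ * B * U) := by
    rw [hV]
    simp [Matrix.transpose_smul, Matrix.smul_mul, Matrix.mul_smul, smul_smul, pow_two]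
  have htrS2 : (Vᵀ * A * V).trace = c ^ 2 * lam l := by
    rw [hVAV, hUAU, trace_smul, trace_smul, htrΨ, gevAux_trace_std, smul_eq_mul,
      smul_eq_mul, mul_one]
  have htrT2 : (Vᵀ * B * V).trace = c ^ 2 := by
    rw [hVBV, hUBU, trace_smul, htrΨ, gevAux_trace_std, smul_eq_mul, mul_one]
  have htrS0T2 : ((Xᵀ * A * X) * (Vᵀ * B * V)).trace = c ^ 2 * lam m := by
    rw [hVBV, hUBU, hS0, Matrix.mul_smul, trace_smul, smul_eq_mul]
    have hmid : (Ψᵀ * ((diagonal lam).submatrix σ σ) * Ψ) * (Ψᵀ * Matrix.single j j (1:ℝ) * Ψ)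
        = Ψᵀ * (((diagonal lam).submatrix σ σ) * Matrix.single j j (1:ℝ)) * Ψ := by
      simp only [Matrix.mul_assoc]
      rw [hΨc]
    rw [hmid, htrΨ, hDσ]
    simp only [gevAux_trace_diag_std]
    rw [hjm]
  -- expansion of the loss along the segment
  have expandA : ∀ t : ℝ, (X + t • V)ᵀ * A * (X + t • V)
      = Xᵀ * A * X + (t ^ 2) • (Vᵀ * A * V) := by
    intro t
    simp only [transpose_add, transpose_smul, Matrix.add_mul, Matrix.mul_add,
      Matrix.smul_mul, Matrix.mul_smul, hXAV, hVAX, smul_zero, add_zero, zero_add,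
      smul_smul, ← pow_two]
  have expandB : ∀ t : ℝ, (X + t • V)ᵀ * B * (X + t • V)
      = 1 + (t ^ 2) • (Vᵀ * B * V) := by
    intro t
    simp only [transpose_add, transpose_smul, Matrix.add_mul, Matrix.mul_add,
      Matrix.smul_mul, Matrix.mul_smul, hXBV, hVBX, smul_zero, add_zero, zero_add,
      smul_smul, ← pow_two, hT0]
  have hEll : (fun t : ℝ => gevEll d r A B (X + t • V))
      = fun t : ℝ => (-2 * (Xᵀ * A * X).trace + (Xᵀ * A * X).trace)
        + (-2 * (Vᵀ * A * V).trace + (Vᵀ * A * V).trace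
            + ((Xᵀ * A * X) * (Vᵀ * B * V)).trace) * t ^ 2
        + ((Vᵀ * A * V) * (Vᵀ * B * V)).trace * t ^ 4 := by
    funext t
    simp only [gevEll, expandA t, expandB t]
    simp only [Matrix.add_mul, Matrix.mul_add, Matrix.mul_one, Matrix.smul_mul,
      Matrix.mul_smul, trace_add, trace_smul, smul_eq_mul, smul_smul]
    ring
  have hq : gevHessQuad d r A B X V = 2 * (lam m - lam l) / nsq := by
    rw [gevHessQuad, hEll, gevAux_iteratedDeriv]
    rw [htrS2, htrS0T2, hc2]
    field_simp
    ring
  -- Frobenius norm of V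
  have hEΨ : ∀ (q : Fin d) (k : Fin r), (E * Ψ) q k = if l = q then Ψ j k else 0 := by
    intro q k
    rw [Matrix.mul_apply]
    have hterm : ∀ k' : Fin r, E q k' * Ψ k' k
        = if l = q then (if j = k' then Ψ k' k else 0) else 0 := by
      intro k'
      rw [hE]
      simp only [Matrix.single, Matrix.of_apply, ite_and]
      by_cases hq : l = q <;> by_cases hk' : j = k' <;> simp [hq, hk']
    simp only [hterm]
    by_cases hq : l = q
    · simp only [hq, if_true]
      rw [Finset.sum_ite_eq Finset.univ j (fun k' => Ψ k' k)]
      simp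
    · simp [hq]
  have hUapp : ∀ (p : Fin d) (k : Fin r), U p k = W p l * Ψ j k := by
    intro p k
    rw [hU, Matrix.mul_apply]
    simp only [hEΨ, mul_ite, mul_zero]
    rw [Finset.sum_ite_eq Finset.univ l (fun q => W p q * Ψ j k)]
    simp
  have hrow : ∑ k : Fin r, Ψ j k ^ 2 = 1 := by
    have h11 : (Ψ * Ψᵀ) j j = (1 : Matrix (Fin r) (Fin r) ℝ) j j := by rw [hΨ']
    simpa [Matrix.mul_apply, Matrix.one_apply, pow_two] using h11
  have hfro : ∑ p : Fin d, ∑ k : Fin r, V p k ^ 2 = 1 := by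
    have hVapp : ∀ (p : Fin d) (k : Fin r), V p k ^ 2
        = c ^ 2 * W p l ^ 2 * Ψ j k ^ 2 := by
      intro p k
      rw [hV, Matrix.smul_apply, hUapp, smul_eq_mul]
      ring
    have h1 : ∀ p : Fin d, ∑ k : Fin r, V p k ^ 2 = c ^ 2 * W p l ^ 2 := by
      intro p
      simp_rw [hVapp p]
      rw [← Finset.mul_sum, hrow, mul_one]
    simp_rw [h1]
    rw [← Finset.mul_sum, ← hnsq, hc2]
    exact inv_mul_cancel₀ (ne_of_gt hnsqpos)
  refine ⟨V, hfro, le_of_eq hq, ?_⟩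
  apply div_neg_of_neg_of_pos _ hnsqpos
  linarith
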